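/- Tightness of the smoothness bound: take A = ℝ, n ≥ 1, the value function f(x) := x 0 − ∑_{i ≠ 0} x i, and e : Fin n → ℝ the indicator of the first coordinate (e 0 = 1 and e i = 0 for i ≠ 0). Then C(f, e) = 2·(1 − 1/n) (and C(f, 0) = 0 for the zero vector 0). -/

import Mathlib

/-- The action of a permutation `π` on a list of transactions `x : Fin n → A`:
`(π · x) i = x (π⁻¹ i)`. -/
def permAct {n : ℕ} {A : Type*} (π : Equiv.Perm (Fin n)) (x : Fin n → A) : Fin n → A :=
  fun i => x (π⁻¹ i)

/-- The cost of MEV: `C(f, x) = max_{π ∈ S} f(π·x) - (∑_{π ∈ S} f(π·x)) / n!`. -/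
noncomputable def mevCost {n : ℕ} {A : Type*} (f : (Fin n → A) → ℝ) (x : Fin n → A) : ℝ :=
  (Finset.univ.sup' Finset.univ_nonempty fun π : Equiv.Perm (Fin n) => f (permAct π x)) -
    (∑ π : Equiv.Perm (Fin n), f (permAct π x)) / (Nat.factorial n : ℝ)

lemma aux_val (m : ℕ) (π : Equiv.Perm (Fin (m+1))) :
    (permAct π (fun i : Fin (m+1) => if i = 0 then (1:ℝ) else 0)) 0
      - ∑ i ∈ Finset.univ.filter (fun i : Fin (m+1) => i ≠ 0),
          permAct π (fun i : Fin (m+1) => if i = 0 then (1:ℝ) else 0) i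
    = if π 0 = 0 then 1 else -1 := by
  have h1 : ∀ i : Fin (m+1), (π⁻¹ i = 0) ↔ (i = π 0) := by
    intro i; constructor
    · intro h; rw [← h]; simp
    · intro h; rw [h]; simp
  simp only [permAct]
  have hsum : ∑ i ∈ Finset.univ.filter (fun i : Fin (m+1) => i ≠ 0),
      (if π⁻¹ i = 0 then (1:ℝ) else 0)
      = if π 0 ≠ 0 then 1 else 0 := by
    have : ∀ i : Fin (m+1), (if π⁻¹ i = 0 then (1:ℝ) else 0) = if i = π 0 then 1 else 0 := by
      intro i; simp only [h1 i]
    simp only [this]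
    rw [Finset.sum_ite_eq' (Finset.univ.filter (fun i : Fin (m+1) => i ≠ 0)) (π 0)]
    simp
  rw [hsum]
  by_cases h : π 0 = 0
  · have : π⁻¹ (0 : Fin (m+1)) = 0 := (h1 0).mpr h.symm
    simp [h, this]
  · have : ¬ (π⁻¹ (0 : Fin (m+1)) = 0) := by
      rw [h1 0]; intro hc; exact h hc.symm
    simp [h, this]
    exact this

lemma aux_sum (m : ℕ) :
    ∑ π : Equiv.Perm (Fin (m+1)), (if π 0 = 0 then (1:ℝ) else -1)
      = (1 - (m:ℝ)) * (Nat.factorial m : ℝ) := by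
  rw [← Equiv.sum_comp (Equiv.Perm.decomposeFin).symm
    (fun π : Equiv.Perm (Fin (m+1)) => (if π 0 = 0 then (1:ℝ) else -1))]
  rw [Fintype.sum_prod_type]
  have : ∀ (p : Fin (m+1)) (e : Equiv.Perm (Fin m)),
      (if (Equiv.Perm.decomposeFin.symm (p, e)) 0 = 0 then (1:ℝ) else -1)
      = if p = 0 then 1 else -1 := by
    intro p e; rw [Equiv.Perm.decomposeFin_symm_apply_zero]
  simp only [this, Finset.sum_const, Fintype.card_perm, Fintype.card_fin, nsmul_eq_mul]
  have h2 : ∑ p : Fin (m+1), (if p = 0 then (1:ℝ) else -1) = 1 - m := by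
    have : ∀ p : Fin (m+1), (if p = 0 then (1:ℝ) else -1) = (if p = 0 then (2:ℝ) else 0) - 1 := by
      intro p; split <;> ring
    simp only [this, Finset.sum_sub_distrib, Finset.sum_ite_eq' Finset.univ (0 : Fin (m+1)),
      Finset.sum_const, Finset.card_univ, Fintype.card_fin, nsmul_eq_mul, Finset.mem_univ, if_true]
    push_cast
    ring
  rw [← Finset.mul_sum, h2]
  simp [Finset.card_univ, Fintype.card_perm, Fintype.card_fin]
  ring

/-- Tightness of the smoothness bound: for `f(x) = x₀ - ∑_{i ≠ 0} xᵢ` and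
`e` the indicator of the first coordinate, `C(f, e) = 2(1 - 1/n)` while `C(f, 0) = 0`. -/
theorem mevCost_tightness_example (n : ℕ) (hn : 0 < n) :
    mevCost
        (fun x : Fin n → ℝ =>
          x ⟨0, hn⟩ - ∑ i ∈ Finset.univ.filter (fun i : Fin n => i ≠ ⟨0, hn⟩), x i)
        (fun i : Fin n => if i = ⟨0, hn⟩ then (1 : ℝ) else 0) = 2 * (1 - 1 / (n : ℝ)) ∧
      mevCost
        (fun x : Fin n → ℝ =>
          x ⟨0, hn⟩ - ∑ i ∈ Finset.univ.filter (fun i : Fin n => i ≠ ⟨0, hn⟩), x i)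
        (fun _ : Fin n => (0 : ℝ)) = 0 := by
  constructor
  · obtain ⟨m, rfl⟩ := Nat.exists_eq_succ_of_ne_zero hn.ne'
    have hz : (⟨0, hn⟩ : Fin (m+1)) = 0 := rfl
    unfold mevCost
    simp only [hz]
    have hval : ∀ π : Equiv.Perm (Fin (m+1)),
        (permAct π (fun i : Fin (m+1) => if i = 0 then (1:ℝ) else 0)) 0
          - ∑ i ∈ Finset.univ.filter (fun i : Fin (m+1) => i ≠ 0),
              permAct π (fun i : Fin (m+1) => if i = 0 then (1:ℝ) else 0) i
        = if π 0 = 0 then 1 else -1 := aux_val m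
    simp only [hval]
    rw [aux_sum]
    have hsup : (Finset.univ.sup' Finset.univ_nonempty
        fun π : Equiv.Perm (Fin (m+1)) => if π 0 = 0 then (1:ℝ) else -1) = 1 := by
      apply le_antisymm
      · exact Finset.sup'_le _ _ (fun π _ => by split <;> norm_num)
      · have h := Finset.le_sup' (fun π : Equiv.Perm (Fin (m+1)) =>
          if π 0 = 0 then (1:ℝ) else -1) (Finset.mem_univ 1)
        exact le_trans (by simp) h
    rw [hsup, Nat.factorial_succ]
    have h1 : (Nat.factorial m : ℝ) ≠ 0 := Nat.cast_ne_zero.mpr (Nat.factorial_ne_zero m)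
    have h2 : ((m:ℝ) + 1) ≠ 0 := by positivity
    push_cast
    field_simp
    ring
  · simp [mevCost, permAct]
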